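/- Under assumptions (A1)–(A4), for all x < y in I, the double integral ∬_{T'_{x,y} × T''_{x,y}} Λ(t',x,y)Λ(t'',x,y)·Ω(M(t',x,y), M(t'',x,y)) dμ(t'') dμ(t') equals S₀'(x,y)S₁''(x,y) − S₁'(x,y)S₀''(x,y), and this quantity is strictly positive. -/

import Mathlib

open MeasureTheory

private lemma setIntegral_pos_aux {T : Type*} [MeasurableSpace T] {μ : Measure T}
    {s u : Set T} (hs : MeasurableSet s) (hu : MeasurableSet u) (hus : u ⊆ s)
    {f : T → ℝ} (hf : Integrable f (μ.restrict s))
    (hnn : ∀ᵐ t ∂μ.restrict s, 0 ≤ f t)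
    (hupos : ∀ t ∈ u, 0 < f t) (huμ : 0 < μ u) :
    0 < ∫ t in s, f t ∂μ := by
  rw [integral_pos_iff_support_of_nonneg_ae hnn hf]
  refine lt_of_lt_of_le ?_
    (measure_mono (fun t ht => (hupos t ht).ne' : u ⊆ Function.support f))
  rwa [Measure.restrict_apply hu, Set.inter_eq_self_of_subset_left hus]

set_option maxHeartbeats 1000000 in
private lemma main_aux {T : Type*} [MeasurableSpace T] (μ : Measure T)
    (l m : T → ℝ) (c : ℝ) (w₀ w₁ : ℝ → ℝ)
    (hl : ∀ t, 0 ≤ l t)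
    (hmeas_m : Measurable m)
    (hl_ae : AEMeasurable l μ)
    (hw₀m : ∀ t, 0 < w₀ (m t))
    (hw₀c : 0 < w₀ c)
    (hgneg : ∀ t, m t < c → 0 < w₀ (m t) * w₁ c - w₀ c * w₁ (m t))
    (hgpos : ∀ t, c < m t → 0 < w₀ c * w₁ (m t) - w₀ (m t) * w₁ c)
    (hint₀ : Integrable (fun t => l t * w₀ (m t)) μ)
    (hint₁ : Integrable (fun t => l t * w₁ (m t)) μ)
    (hrep₀ : w₀ c = ∫ t, l t * w₀ (m t) ∂μ)
    (hrep₁ : w₁ c = ∫ t, l t * w₁ (m t) ∂μ)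
    (hpos : 0 < μ {t | 0 < l t ∧ m t ≠ c}) :
    (∫ t' in {t | 0 < l t ∧ m t < c},
        ∫ t'' in {t | 0 < l t ∧ c ≤ m t},
          l t' * l t'' * (w₀ (m t') * w₁ (m t'') - w₀ (m t'') * w₁ (m t')) ∂μ ∂μ) =
      (∫ t in {t | 0 < l t ∧ m t < c}, l t * w₀ (m t) ∂μ) *
        (∫ t in {t | 0 < l t ∧ c ≤ m t}, l t * w₁ (m t) ∂μ) -
      (∫ t in {t | 0 < l t ∧ m t < c}, l t * w₁ (m t) ∂μ) *
        (∫ t in {t | 0 < l t ∧ c ≤ m t}, l t * w₀ (m t) ∂μ) ∧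
    0 < (∫ t' in {t | 0 < l t ∧ m t < c},
        ∫ t'' in {t | 0 < l t ∧ c ≤ m t},
          l t' * l t'' * (w₀ (m t') * w₁ (m t'') - w₀ (m t'') * w₁ (m t')) ∂μ ∂μ) := by
  classical
  set s' : Set T := {t | 0 < l t ∧ m t < c} with hs'def
  set s'' : Set T := {t | 0 < l t ∧ c ≤ m t} with hs''def
  set A := ∫ t in s', l t * w₀ (m t) ∂μ with hA
  set B := ∫ t in s', l t * w₁ (m t) ∂μ with hB
  set C := ∫ t in s'', l t * w₀ (m t) ∂μ with hC
  set D := ∫ t in s'', l t * w₁ (m t) ∂μ with hD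
  -- Equality part
  have hinner : ∀ t', (∫ t'' in s'',
      l t' * l t'' * (w₀ (m t') * w₁ (m t'') - w₀ (m t'') * w₁ (m t')) ∂μ)
      = (l t' * w₀ (m t')) * D - (l t' * w₁ (m t')) * C := by
    intro t'
    have h1 : (fun t'' => l t' * l t'' * (w₀ (m t') * w₁ (m t'') - w₀ (m t'') * w₁ (m t')))
        = fun t'' => (l t' * w₀ (m t')) * (l t'' * w₁ (m t''))
            - (l t' * w₁ (m t')) * (l t'' * w₀ (m t'')) := by
      funext t''; ring
    rw [h1, integral_sub ((hint₁.restrict).const_mul _) ((hint₀.restrict).const_mul _),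
      integral_const_mul, integral_const_mul]
  have hEq : (∫ t' in s', ∫ t'' in s'',
      l t' * l t'' * (w₀ (m t') * w₁ (m t'') - w₀ (m t'') * w₁ (m t')) ∂μ ∂μ)
      = A * D - B * C := by
    calc (∫ t' in s', ∫ t'' in s'',
        l t' * l t'' * (w₀ (m t') * w₁ (m t'') - w₀ (m t'') * w₁ (m t')) ∂μ ∂μ)
        = ∫ t' in s', ((l t' * w₀ (m t')) * D - (l t' * w₁ (m t')) * C) ∂μ :=
          integral_congr_ae (Filter.Eventually.of_forall fun t' => hinner t')
      _ = A * D - B * C := by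
          rw [integral_sub (hint₀.restrict.mul_const _) (hint₁.restrict.mul_const _),
            integral_mul_const, integral_mul_const]
  refine ⟨hEq, ?_⟩
  rw [hEq]
  -- Positivity part
  set g : T → ℝ := fun t => w₀ c * w₁ (m t) - w₀ (m t) * w₁ c with hgdef
  have hgrw : (fun t => l t * g t)
      = fun t => w₀ c * (l t * w₁ (m t)) - w₁ c * (l t * w₀ (m t)) := by
    funext t; simp only [hgdef]; ring
  have hg_int : Integrable (fun t => l t * g t) μ := by
    rw [hgrw]; exact (hint₁.const_mul _).sub (hint₀.const_mul _)
  have hg_zero : ∫ t, l t * g t ∂μ = 0 := by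
    rw [hgrw, integral_sub (hint₁.const_mul _) (hint₀.const_mul _),
      integral_const_mul, integral_const_mul, ← hrep₀, ← hrep₁]
    ring
  have hgneg' : ∀ t, m t < c → g t < 0 := by
    intro t h; have := hgneg t h; simp only [hgdef]; linarith
  have hgpos' : ∀ t, c < m t → 0 < g t := by
    intro t h; have := hgpos t h; simp only [hgdef]; linarith
  have hgzero' : ∀ t, m t = c → g t = 0 := by
    intro t h; simp only [hgdef, h]; ring
  have hlpos_of : ∀ t, l t * g t ≠ 0 → 0 < l t := by
    intro t h
    rcases (hl t).lt_or_eq with h' | h'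
    · exact h'
    · exact absurd (by rw [← h']; ring) h
  have hsub_pos : {t | 0 < l t * g t} ⊆ {t | 0 < l t ∧ c < m t} := by
    intro t ht
    have hlt : 0 < l t := hlpos_of t (ne_of_gt ht)
    refine ⟨hlt, ?_⟩
    by_contra h
    rcases (not_lt.mp h).lt_or_eq with h' | h'
    · have := hgneg' t h'
      nlinarith [Set.mem_setOf_eq ▸ ht]
    · have := hgzero' t h'
      simp only [Set.mem_setOf_eq, this, mul_zero, lt_irrefl] at ht
  have hsub_neg : {t | l t * g t < 0} ⊆ s' := by
    intro t ht
    have hlt : 0 < l t := hlpos_of t (ne_of_lt ht)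
    refine ⟨hlt, ?_⟩
    by_contra h
    rcases (not_lt.mp h).lt_or_eq with h' | h'
    · have := hgpos' t h'
      nlinarith [Set.mem_setOf_eq ▸ ht]
    · have := hgzero' t h'.symm
      simp only [Set.mem_setOf_eq, this, mul_zero, lt_irrefl] at ht
  have hsub_ne : {t | 0 < l t ∧ m t ≠ c} ⊆ {t | ¬ l t * g t = 0} := by
    intro t ht
    rcases ht.2.lt_or_gt with h' | h'
    · exact ne_of_lt (mul_neg_of_pos_of_neg ht.1 (hgneg' t h'))
    · exact ne_of_gt (mul_pos ht.1 (hgpos' t h'))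
  have hcontra : ¬ ((fun t => l t * g t) =ᶠ[ae μ] 0) := by
    intro h
    have h0 : μ {t | ¬ l t * g t = 0} = 0 := h
    exact absurd (measure_mono_null hsub_ne h0) hpos.ne'
  -- both half-sets have positive measure
  have hpos_plus : 0 < μ {t | 0 < l t ∧ c < m t} := by
    by_contra h
    have hnull : μ {t | 0 < l t ∧ c < m t} = 0 :=
      le_antisymm (not_lt.mp h) zero_le
    have hae_le : ∀ᵐ t ∂μ, l t * g t ≤ 0 := by
      have : {t | ¬ l t * g t ≤ 0} ⊆ {t | 0 < l t ∧ c < m t} := by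
        intro t ht; exact hsub_pos (not_le.mp ht)
      exact (measure_mono_null this hnull)
    have hnn : ∀ᵐ t ∂μ, 0 ≤ -(l t * g t) := by
      filter_upwards [hae_le] with t ht; linarith
    have h0 : (∫ t, -(l t * g t) ∂μ) = 0 := by
      rw [integral_neg, hg_zero]; ring
    have := (integral_eq_zero_iff_of_nonneg_ae hnn hg_int.neg).mp h0
    refine hcontra ?_
    filter_upwards [this] with t ht
    simpa using neg_eq_zero.mp ht
  have hpos_minus : 0 < μ s' := by
    by_contra h
    have hnull : μ s' = 0 := le_antisymm (not_lt.mp h) zero_le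
    have hae_ge : ∀ᵐ t ∂μ, 0 ≤ l t * g t := by
      have : {t | ¬ 0 ≤ l t * g t} ⊆ s' := by
        intro t ht; exact hsub_neg (not_le.mp ht)
      exact ae_iff.mpr (measure_mono_null this hnull)
    exact hcontra ((integral_eq_zero_iff_of_nonneg_ae hae_ge hg_int).mp hg_zero)
  -- measurable versions of the sets
  set lm := hl_ae.mk l with hlm
  have hmeas_lm : Measurable lm := hl_ae.measurable_mk
  have heq : l =ᶠ[ae μ] lm := hl_ae.ae_eq_mk
  set E' := toMeasurable μ {t | l t ≠ lm t} with hE'def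
  have hEnull : μ {t | l t ≠ lm t} = 0 := heq
  have hE'null : μ E' = 0 := by rw [hE'def, measure_toMeasurable]; exact hEnull
  have hE'meas : MeasurableSet E' := measurableSet_toMeasurable μ _
  have hnotE' : ∀ t, t ∉ E' → l t = lm t := by
    intro t ht
    by_contra h
    exact ht (subset_toMeasurable μ _ h)
  set sm' : Set T := {t | 0 < lm t ∧ m t < c} with hsm'def
  set sm'' : Set T := {t | 0 < lm t ∧ c ≤ m t} with hsm''def
  set smp : Set T := {t | 0 < lm t ∧ c < m t} with hsmpdef
  have hsm'meas : MeasurableSet sm' :=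
    (measurableSet_lt measurable_const hmeas_lm).inter (measurableSet_lt hmeas_m measurable_const)
  have hsm''meas : MeasurableSet sm'' :=
    (measurableSet_lt measurable_const hmeas_lm).inter (measurableSet_le measurable_const hmeas_m)
  have hsmpmeas : MeasurableSet smp :=
    (measurableSet_lt measurable_const hmeas_lm).inter (measurableSet_lt measurable_const hmeas_m)
  have hs'ae : s' =ᶠ[ae μ] sm' := by
    filter_upwards [heq] with t ht
    show (0 < l t ∧ m t < c) = (0 < lm t ∧ m t < c)
    rw [ht]
  have hs''ae : s'' =ᶠ[ae μ] sm'' := by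
    filter_upwards [heq] with t ht
    show (0 < l t ∧ c ≤ m t) = (0 < lm t ∧ c ≤ m t)
    rw [ht]
  have hspae : {t | 0 < l t ∧ c < m t} =ᶠ[ae μ] smp := by
    filter_upwards [heq] with t ht
    show (0 < l t ∧ c < m t) = (0 < lm t ∧ c < m t)
    rw [ht]
  have hr' : μ.restrict s' = μ.restrict sm' := Measure.restrict_congr_set hs'ae
  have hr'' : μ.restrict s'' = μ.restrict sm'' := Measure.restrict_congr_set hs''ae
  have hμsm' : 0 < μ sm' := by rwa [← measure_congr hs'ae]
  have hμsmp : 0 < μ smp := by rwa [← measure_congr hspae]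
  -- the good subsets
  have hu'meas : MeasurableSet (sm' \ E') := hsm'meas.diff hE'meas
  have hu''meas : MeasurableSet (smp \ E') := hsmpmeas.diff hE'meas
  have hμu' : 0 < μ (sm' \ E') := by rwa [measure_diff_null hE'null]
  have hμu'' : 0 < μ (smp \ E') := by rwa [measure_diff_null hE'null]
  have hsmpsub : smp ⊆ sm'' := fun t ht => ⟨ht.1, le_of_lt ht.2⟩
  -- rewrite A,B,C,D over measurable sets
  have hA' : A = ∫ t in sm', l t * w₀ (m t) ∂μ := by rw [hA, hr']
  have hB' : B = ∫ t in sm', l t * w₁ (m t) ∂μ := by rw [hB, hr']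
  have hC' : C = ∫ t in sm'', l t * w₀ (m t) ∂μ := by rw [hC, hr'']
  have hD' : D = ∫ t in sm'', l t * w₁ (m t) ∂μ := by rw [hD, hr'']
  -- P > 0
  have hP : 0 < w₁ c * A - w₀ c * B := by
    have h1 : w₁ c * A - w₀ c * B
        = ∫ t in sm', (w₁ c * (l t * w₀ (m t)) - w₀ c * (l t * w₁ (m t))) ∂μ := by
      rw [integral_sub ((hint₀.restrict).const_mul _) ((hint₁.restrict).const_mul _),
        integral_const_mul, integral_const_mul, hA', hB']
    rw [h1]
    refine setIntegral_pos_aux hsm'meas hu'meas Set.diff_subset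
      (((hint₀.restrict).const_mul _).sub ((hint₁.restrict).const_mul _)) ?_ ?_ hμu'
    · filter_upwards [ae_restrict_mem hsm'meas, ae_restrict_of_ae heq] with t ht hteq
      have hlt : 0 < l t := by rw [hteq]; exact ht.1
      have hg := hgneg t ht.2
      nlinarith [mul_pos hlt hg]
    · intro t ht
      have hlt : 0 < l t := by rw [hnotE' t ht.2]; exact ht.1.1
      have hg := hgneg t ht.1.2
      nlinarith [mul_pos hlt hg]
  -- Q > 0
  have hQ : 0 < w₀ c * D - w₁ c * C := by
    have h1 : w₀ c * D - w₁ c * C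
        = ∫ t in sm'', (w₀ c * (l t * w₁ (m t)) - w₁ c * (l t * w₀ (m t))) ∂μ := by
      rw [integral_sub ((hint₁.restrict).const_mul _) ((hint₀.restrict).const_mul _),
        integral_const_mul, integral_const_mul, hC', hD']
    rw [h1]
    refine setIntegral_pos_aux hsm''meas hu''meas
      (Set.diff_subset.trans hsmpsub)
      (((hint₁.restrict).const_mul _).sub ((hint₀.restrict).const_mul _)) ?_ ?_ hμu''
    · filter_upwards [ae_restrict_mem hsm''meas] with t ht
      rcases ht.2.lt_or_eq with h' | h'
      · have hg := hgpos t h'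
        nlinarith [mul_nonneg (hl t) hg.le]
      · have h0 : w₀ c * (l t * w₁ (m t)) - w₁ c * (l t * w₀ (m t)) = 0 := by
          rw [← h']; ring
        linarith
    · intro t ht
      have hlt : 0 < l t := by rw [hnotE' t ht.2]; exact ht.1.1
      have hg := hgpos t ht.1.2
      nlinarith [mul_pos hlt hg]
  -- A > 0, C ≥ 0
  have hApos : 0 < A := by
    rw [hA']
    refine setIntegral_pos_aux hsm'meas hu'meas Set.diff_subset (hint₀.restrict) ?_ ?_ hμu'
    · exact Filter.Eventually.of_forall fun t => mul_nonneg (hl t) (hw₀m t).le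
    · intro t ht
      have hlt : 0 < l t := by rw [hnotE' t ht.2]; exact ht.1.1
      exact mul_pos hlt (hw₀m t)
  have hCnn : 0 ≤ C :=
    integral_nonneg fun t => mul_nonneg (hl t) (hw₀m t).le
  -- conclude
  have hkey : w₀ c * (A * D - B * C)
      = A * (w₀ c * D - w₁ c * C) + C * (w₁ c * A - w₀ c * B) := by ring
  have hcomb : 0 < w₀ c * (A * D - B * C) := by
    rw [hkey]
    have h1 : 0 < A * (w₀ c * D - w₁ c * C) := mul_pos hApos hQ
    have h2 : 0 ≤ C * (w₁ c * A - w₀ c * B) := mul_nonneg hCnn hP.le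
    linarith
  by_contra hcon
  push_neg at hcon
  nlinarith [mul_nonpos_of_nonneg_of_nonpos hw₀c.le hcon]


/-- under (A1)–(A4), the double integral
`∬_{T'×T''} Λ(t')Λ(t'')Ω(M(t'),M(t'')) dμ dμ` equals
`S₀'S₁'' − S₁'S₀''`, and this quantity is strictly positive. -/
theorem double_integral_positive
    (a b : ℝ) (hab : a < b)
    (ω₀ ω₁ : ℝ → ℝ)
    (hc₀ : ContinuousOn ω₀ (Set.Ioo a b)) (hc₁ : ContinuousOn ω₁ (Set.Ioo a b))
    (hω₀pos : ∀ z ∈ Set.Ioo a b, 0 < ω₀ z)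
    (hcheb : ∀ u ∈ Set.Ioo a b, ∀ v ∈ Set.Ioo a b, u < v →
        0 < ω₀ u * ω₁ v - ω₀ v * ω₁ u)
    {T : Type*} [MeasurableSpace T] (μ : Measure T)
    (Λ M : T → ℝ → ℝ → ℝ) (M₀ : ℝ → ℝ → ℝ)
    (hΛnn : ∀ t x y, 0 ≤ Λ t x y)
    (hΛint : ∀ x ∈ Set.Ioo a b, ∀ y ∈ Set.Ioo a b, x < y →
        Integrable (fun t => Λ t x y) μ)
    (hMmeas : ∀ x y, Measurable (fun t => M t x y))
    (hMmean : ∀ t, ∀ x ∈ Set.Ioo a b, ∀ y ∈ Set.Ioo a b, x < y →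
        M t x y ∈ Set.Icc x y)
    (hM₀strict : ∀ x ∈ Set.Ioo a b, ∀ y ∈ Set.Ioo a b, x < y →
        M₀ x y ∈ Set.Ioo x y)
    (hposmeas : ∀ x ∈ Set.Ioo a b, ∀ y ∈ Set.Ioo a b, x < y →
        0 < μ {t | 0 < Λ t x y ∧ M t x y ≠ M₀ x y})
    (hint₀ : ∀ x ∈ Set.Ioo a b, ∀ y ∈ Set.Ioo a b, x < y →
        Integrable (fun t => Λ t x y * ω₀ (M t x y)) μ)
    (hint₁ : ∀ x ∈ Set.Ioo a b, ∀ y ∈ Set.Ioo a b, x < y →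
        Integrable (fun t => Λ t x y * ω₁ (M t x y)) μ)
    (hrep₀ : ∀ x ∈ Set.Ioo a b, ∀ y ∈ Set.Ioo a b, x < y →
        ω₀ (M₀ x y) = ∫ t, Λ t x y * ω₀ (M t x y) ∂μ)
    (hrep₁ : ∀ x ∈ Set.Ioo a b, ∀ y ∈ Set.Ioo a b, x < y →
        ω₁ (M₀ x y) = ∫ t, Λ t x y * ω₁ (M t x y) ∂μ) :
    ∀ x ∈ Set.Ioo a b, ∀ y ∈ Set.Ioo a b, x < y →
      (∫ t' in {t | 0 < Λ t x y ∧ M t x y < M₀ x y},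
          ∫ t'' in {t | 0 < Λ t x y ∧ M₀ x y ≤ M t x y},
            Λ t' x y * Λ t'' x y *
              (ω₀ (M t' x y) * ω₁ (M t'' x y) - ω₀ (M t'' x y) * ω₁ (M t' x y)) ∂μ ∂μ) =
        (∫ t in {t | 0 < Λ t x y ∧ M t x y < M₀ x y}, Λ t x y * ω₀ (M t x y) ∂μ) *
          (∫ t in {t | 0 < Λ t x y ∧ M₀ x y ≤ M t x y}, Λ t x y * ω₁ (M t x y) ∂μ) -
        (∫ t in {t | 0 < Λ t x y ∧ M t x y < M₀ x y}, Λ t x y * ω₁ (M t x y) ∂μ) *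
          (∫ t in {t | 0 < Λ t x y ∧ M₀ x y ≤ M t x y}, Λ t x y * ω₀ (M t x y) ∂μ) ∧
      0 < (∫ t' in {t | 0 < Λ t x y ∧ M t x y < M₀ x y},
          ∫ t'' in {t | 0 < Λ t x y ∧ M₀ x y ≤ M t x y},
            Λ t' x y * Λ t'' x y *
              (ω₀ (M t' x y) * ω₁ (M t'' x y) - ω₀ (M t'' x y) * ω₁ (M t' x y)) ∂μ ∂μ) := by
  intro x hx y hy hxy
  have hMIoo : ∀ t, M t x y ∈ Set.Ioo a b := fun t =>
    ⟨hx.1.trans_le (hMmean t x hx y hy hxy).1, ((hMmean t x hx y hy hxy).2).trans_lt hy.2⟩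
  have hM₀Ioo : M₀ x y ∈ Set.Ioo a b :=
    ⟨hx.1.trans (hM₀strict x hx y hy hxy).1, (hM₀strict x hx y hy hxy).2.trans hy.2⟩
  exact main_aux μ (fun t => Λ t x y) (fun t => M t x y) (M₀ x y) ω₀ ω₁
    (fun t => hΛnn t x y) (hMmeas x y)
    (hΛint x hx y hy hxy).aestronglyMeasurable.aemeasurable
    (fun t => hω₀pos _ (hMIoo t)) (hω₀pos _ hM₀Ioo)
    (fun t h => hcheb _ (hMIoo t) _ hM₀Ioo h)
    (fun t h => hcheb _ hM₀Ioo _ (hMIoo t) h)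
    (hint₀ x hx y hy hxy) (hint₁ x hx y hy hxy)
    (hrep₀ x hx y hy hxy) (hrep₁ x hx y hy hxy)
    (hposmeas x hx y hy hxy)
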